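/- Let Λ_c be the category whose objects are the natural numbers, whose hom-set from n to m is ZM(n,m)/≈, and whose composition is induced by composition of functions ℤ → ℤ (this composition is well defined on ≈-classes). Then Λ_c is isomorphic to its opposite category via an isomorphism of categories that is the identity on objects; that is, the cyclic category is self-dual. -/

import Mathlib

open CategoryTheory

/-- Membership in `ℤMon(ⁿ↺ℤ, ᵐ↺ℤ)`: monotone and equivariant. -/
def InZM (n m : ℕ) (f : ℤ → ℤ) : Prop :=
  Monotone f ∧ ∀ k : ℤ, f (k + (n + 1)) = f k + (m + 1)

/-- `ℤMon(ⁿ↺ℤ, ᵐ↺ℤ)`: monotone `ℤ`-equivariant maps. -/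
abbrev ZM (n m : ℕ) : Type := {f : ℤ → ℤ // InZM n m f}

/-- The `ℤ`-action relation `≈` on `ZM n m`. -/
def ZMrel (n m : ℕ) (f g : ZM n m) : Prop :=
  ∃ c : ℤ, ∀ k : ℤ, g.1 k = f.1 (k + c * ((n : ℤ) + 1))

/-- Composition in `ℤMon`. -/
def compZM {n m l : ℕ} (f : ZM n m) (g : ZM m l) : ZM n l :=
  ⟨g.1 ∘ f.1, (g.2.1).comp f.2.1, fun k => by
    simp only [Function.comp_apply]
    rw [f.2.2 k, g.2.2]⟩

/-- Iterated equivariance. -/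
lemma ZM_iter {n m : ℕ} (f : ZM n m) (d : ℤ) :
    ∀ k : ℤ, f.1 (k + d * ((n : ℤ) + 1)) = f.1 k + d * ((m : ℤ) + 1) := by
  induction d using Int.induction_on with
  | zero => intro k; simp
  | succ i ih =>
      intro k
      have h1 : k + ((i : ℤ) + 1) * ((n : ℤ) + 1)
          = (k + ((n : ℤ) + 1)) + (i : ℤ) * ((n : ℤ) + 1) := by ring
      rw [h1, ih, f.2.2 k]
      ring
  | pred i ih =>
      intro k
      have h1 : k + (-(i : ℤ) - 1) * ((n : ℤ) + 1)
          = (k - ((n : ℤ) + 1)) + (-(i : ℤ)) * ((n : ℤ) + 1) := by ring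
      have h3 := f.2.2 (k - ((n : ℤ) + 1))
      have h4 : k - ((n : ℤ) + 1) + ((n : ℤ) + 1) = k := by ring
      rw [h4] at h3
      rw [h1, ih]
      linarith [h3]

lemma compZM_left {n m l : ℕ} (g : ZM m l) {f f' : ZM n m} (hf : ZMrel n m f f') :
    ZMrel n l (compZM f g) (compZM f' g) := by
  obtain ⟨c, hc⟩ := hf
  exact ⟨c, fun k => by simp only [compZM, Function.comp_apply, hc k]⟩

lemma compZM_right {n m l : ℕ} (f : ZM n m) {g g' : ZM m l} (hg : ZMrel m l g g') :
    ZMrel n l (compZM f g) (compZM f g') := by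
  obtain ⟨d, hd⟩ := hg
  refine ⟨d, fun k => ?_⟩
  calc (compZM f g').1 k = g'.1 (f.1 k) := rfl
    _ = g.1 (f.1 k + d * ((m : ℤ) + 1)) := hd (f.1 k)
    _ = g.1 (f.1 (k + d * ((n : ℤ) + 1))) := by rw [ZM_iter f d k]
    _ = (compZM f g).1 (k + d * ((n : ℤ) + 1)) := rfl

/-- The (combinatorial) cyclic category `Λ_c`: objects are natural numbers, morphisms
`n → m` are `≈`-classes of elements of `ℤMon(ⁿ↺ℤ, ᵐ↺ℤ)`. -/
def LambdaC : Type := ℕ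

instance : Category LambdaC where
  Hom n m := Quot (ZMrel n m)
  id n := Quot.mk _ ⟨id, monotone_id, fun _ => rfl⟩
  comp {a b c} f g :=
    Quot.lift₂ (fun f0 g0 => Quot.mk (ZMrel a c) (compZM f0 g0))
      (fun f0 _ _ hg => Quot.sound (compZM_right f0 hg))
      (fun _ _ g0 hf => Quot.sound (compZM_left g0 hf)) f g
  id_comp := by
    intro a b f
    induction f using Quot.ind with
    | _ f => rfl
  comp_id := by
    intro a b f
    induction f using Quot.ind with
    | _ f => rfl
  assoc := by
    intro a b c d f g h
    induction f using Quot.ind with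
    | _ f =>
      induction g using Quot.ind with
      | _ g =>
        induction h using Quot.ind with
        | _ h => rfl

noncomputable section DualityConstruction

lemma ZM_unbdd_above {n m : ℕ} (f : ZM n m) (j : ℤ) : ∃ k, j ≤ f.1 k := by
  refine ⟨(max (j - f.1 0) 0) * ((n:ℤ)+1), ?_⟩
  have h := ZM_iter f (max (j - f.1 0) 0) 0
  rw [zero_add] at h
  rw [h]
  have h1 : (0:ℤ) ≤ max (j - f.1 0) 0 := le_max_right _ _
  have h2 : j - f.1 0 ≤ max (j - f.1 0) 0 := le_max_left _ _
  nlinarith [mul_nonneg h1 (by positivity : (0:ℤ) ≤ (m:ℤ))]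

lemma ZM_unbdd_below {n m : ℕ} (f : ZM n m) (j : ℤ) : ∃ k, f.1 k < j := by
  refine ⟨(-(max (f.1 0 - j + 1) 0)) * ((n:ℤ)+1), ?_⟩
  have h := ZM_iter f (-(max (f.1 0 - j + 1) 0)) 0
  rw [zero_add] at h
  rw [h]
  have h1 : (0:ℤ) ≤ max (f.1 0 - j + 1) 0 := le_max_right _ _
  have h2 : f.1 0 - j + 1 ≤ max (f.1 0 - j + 1) 0 := le_max_left _ _
  nlinarith [mul_nonneg h1 (by positivity : (0:ℤ) ≤ (m:ℤ))]

/-- `dmin f j = min {k | j ≤ f k}`. -/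
def dmin {n m : ℕ} (f : ZM n m) (j : ℤ) : ℤ := sInf {k : ℤ | j ≤ f.1 k}

lemma dmin_set_nonempty {n m : ℕ} (f : ZM n m) (j : ℤ) :
    {k : ℤ | j ≤ f.1 k}.Nonempty := ZM_unbdd_above f j

lemma dmin_set_bddBelow {n m : ℕ} (f : ZM n m) (j : ℤ) :
    BddBelow {k : ℤ | j ≤ f.1 k} := by
  obtain ⟨b, hb⟩ := ZM_unbdd_below f j
  refine ⟨b, fun k hk => ?_⟩
  by_contra h
  push_neg at h
  exact absurd hk (not_le.2 (lt_of_le_of_lt (f.2.1 h.le) hb))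

lemma dmin_galois {n m : ℕ} (f : ZM n m) (j k : ℤ) :
    dmin f j ≤ k ↔ j ≤ f.1 k := by
  constructor
  · intro h
    have hm : dmin f j ∈ {k : ℤ | j ≤ f.1 k} :=
      Int.csInf_mem (dmin_set_nonempty f j) (dmin_set_bddBelow f j)
    exact le_trans hm (f.2.1 h)
  · intro h
    exact csInf_le (dmin_set_bddBelow f j) h

/-- `dmax f j = max {k | f k ≤ j}`. -/
def dmax {n m : ℕ} (f : ZM n m) (j : ℤ) : ℤ := sSup {k : ℤ | f.1 k ≤ j}

lemma dmax_set_nonempty {n m : ℕ} (f : ZM n m) (j : ℤ) :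
    {k : ℤ | f.1 k ≤ j}.Nonempty := by
  obtain ⟨b, hb⟩ := ZM_unbdd_below f (j + 1)
  exact ⟨b, by simpa using Int.lt_add_one_iff.mp hb⟩

lemma dmax_set_bddAbove {n m : ℕ} (f : ZM n m) (j : ℤ) :
    BddAbove {k : ℤ | f.1 k ≤ j} := by
  obtain ⟨b, hb⟩ := ZM_unbdd_above f (j + 1)
  refine ⟨b, fun k hk => ?_⟩
  by_contra h
  push_neg at h
  have h1 : f.1 k ≤ j := hk
  have h2 : j + 1 ≤ f.1 k := le_trans hb (f.2.1 h.le)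
  omega

lemma dmax_galois {n m : ℕ} (f : ZM n m) (j k : ℤ) :
    k ≤ dmax f j ↔ f.1 k ≤ j := by
  constructor
  · intro h
    have hm : dmax f j ∈ {k : ℤ | f.1 k ≤ j} :=
      Int.csSup_mem (dmax_set_nonempty f j) (dmax_set_bddAbove f j)
    exact le_trans (f.2.1 h) hm
  · intro h
    exact le_csSup (dmax_set_bddAbove f j) h

/-- `dmin` packaged as an element of `ZM m n`. -/
def dminZM {n m : ℕ} (f : ZM n m) : ZM m n := by
  refine ⟨dmin f, fun a b hab => ?_, fun j => ?_⟩
  · exact (dmin_galois f a _).2 (le_trans hab ((dmin_galois f b _).1 le_rfl))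
  · apply le_antisymm
    · rw [dmin_galois, f.2.2]
      have := (dmin_galois f j (dmin f j)).1 le_rfl
      linarith
    · have h1 : j + ((m:ℤ)+1) ≤ f.1 (dmin f (j + ((m:ℤ)+1))) :=
        (dmin_galois f _ _).1 le_rfl
      have h2 := f.2.2 (dmin f (j + ((m:ℤ)+1)) - ((n:ℤ)+1))
      have h3 : dmin f (j + ((m:ℤ)+1)) - ((n:ℤ)+1) + ((n:ℤ)+1)
          = dmin f (j + ((m:ℤ)+1)) := by ring
      rw [h3] at h2
      have h4 : dmin f j ≤ dmin f (j + ((m:ℤ)+1)) - ((n:ℤ)+1) := by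
        rw [dmin_galois]; linarith
      linarith

/-- `dmax` packaged as an element of `ZM m n`. -/
def dmaxZM {n m : ℕ} (f : ZM n m) : ZM m n := by
  refine ⟨dmax f, fun a b hab => ?_, fun j => ?_⟩
  · exact (dmax_galois f b _).2 (le_trans ((dmax_galois f a _).1 le_rfl) hab)
  · apply le_antisymm
    · have h1 : f.1 (dmax f (j + ((m:ℤ)+1))) ≤ j + ((m:ℤ)+1) :=
        (dmax_galois f _ _).1 le_rfl
      have h2 := f.2.2 (dmax f (j + ((m:ℤ)+1)) - ((n:ℤ)+1))
      have h3 : dmax f (j + ((m:ℤ)+1)) - ((n:ℤ)+1) + ((n:ℤ)+1)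
          = dmax f (j + ((m:ℤ)+1)) := by ring
      rw [h3] at h2
      have h4 : dmax f (j + ((m:ℤ)+1)) - ((n:ℤ)+1) ≤ dmax f j := by
        rw [dmax_galois]; linarith
      linarith
    · rw [dmax_galois, f.2.2]
      have := (dmax_galois f j (dmax f j)).1 le_rfl
      linarith

lemma dminZM_comp {n m l : ℕ} (f : ZM n m) (g : ZM m l) :
    dminZM (compZM f g) = compZM (dminZM g) (dminZM f) := by
  apply Subtype.ext
  funext j
  apply eq_of_forall_ge_iff
  intro k
  show dmin (compZM f g) j ≤ k ↔ dmin f (dmin g j) ≤ k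
  rw [dmin_galois, dmin_galois, dmin_galois]
  exact Iff.rfl

lemma dmaxZM_comp {n m l : ℕ} (f : ZM n m) (g : ZM m l) :
    dmaxZM (compZM f g) = compZM (dmaxZM g) (dmaxZM f) := by
  apply Subtype.ext
  funext j
  apply eq_of_forall_le_iff
  intro k
  show k ≤ dmax (compZM f g) j ↔ k ≤ dmax f (dmax g j)
  rw [dmax_galois, dmax_galois, dmax_galois]
  exact Iff.rfl

def idZM (n : ℕ) : ZM n n := ⟨id, monotone_id, fun _ => rfl⟩

lemma dminZM_id (n : ℕ) : dminZM (idZM n) = idZM n := by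
  apply Subtype.ext
  funext j
  apply eq_of_forall_ge_iff
  intro k
  rw [show (dminZM (idZM n)).1 j = dmin (idZM n) j from rfl, dmin_galois]
  exact Iff.rfl

lemma dmaxZM_id (n : ℕ) : dmaxZM (idZM n) = idZM n := by
  apply Subtype.ext
  funext j
  apply eq_of_forall_le_iff
  intro k
  rw [show (dmaxZM (idZM n)).1 j = dmax (idZM n) j from rfl, dmax_galois]
  exact Iff.rfl

lemma dmaxZM_dminZM {n m : ℕ} (f : ZM n m) : dmaxZM (dminZM f) = f := by
  apply Subtype.ext
  funext j
  apply eq_of_forall_le_iff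
  intro k
  rw [show (dmaxZM (dminZM f)).1 j = dmax (dminZM f) j from rfl, dmax_galois]
  exact (dmin_galois f k j)

lemma dminZM_dmaxZM {n m : ℕ} (f : ZM n m) : dminZM (dmaxZM f) = f := by
  apply Subtype.ext
  funext j
  apply eq_of_forall_ge_iff
  intro k
  rw [show (dminZM (dmaxZM f)).1 j = dmin (dmaxZM f) j from rfl, dmin_galois]
  exact (dmax_galois f k j)

lemma dminZM_rel {n m : ℕ} {f f' : ZM n m} (h : ZMrel n m f f') :
    ZMrel m n (dminZM f) (dminZM f') := by
  obtain ⟨c, hc⟩ := h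
  refine ⟨-c, fun j => ?_⟩
  have hiter := ZM_iter (dminZM f) (-c) j
  rw [hiter]
  apply eq_of_forall_ge_iff
  intro k
  show dmin f' j ≤ k ↔ (dminZM f).1 j + -c * ((n:ℤ)+1) ≤ k
  rw [dmin_galois, hc k]
  have h2 : (dminZM f).1 j = dmin f j := rfl
  constructor
  · intro h1
    have : dmin f j ≤ k + c * ((n:ℤ)+1) := (dmin_galois f j _).2 h1
    linarith
  · intro h1
    have : dmin f j ≤ k + c * ((n:ℤ)+1) := by linarith
    exact (dmin_galois f j _).1 this

lemma dmaxZM_rel {n m : ℕ} {f f' : ZM n m} (h : ZMrel n m f f') :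
    ZMrel m n (dmaxZM f) (dmaxZM f') := by
  obtain ⟨c, hc⟩ := h
  refine ⟨-c, fun j => ?_⟩
  have hiter := ZM_iter (dmaxZM f) (-c) j
  rw [hiter]
  apply eq_of_forall_le_iff
  intro k
  show k ≤ dmax f' j ↔ k ≤ (dmaxZM f).1 j + -c * ((n:ℤ)+1)
  rw [dmax_galois, hc k]
  constructor
  · intro h1
    have : k + c * ((n:ℤ)+1) ≤ dmax f j := (dmax_galois f j _).2 h1
    have h2 : (dmaxZM f).1 j = dmax f j := rfl
    linarith
  · intro h1
    have h2 : (dmaxZM f).1 j = dmax f j := rfl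
    have : k + c * ((n:ℤ)+1) ≤ dmax f j := by linarith
    exact (dmax_galois f j _).1 this

/-- Package a `ZM` element as a morphism of `Λ_c`. -/
def mkHom (n m : LambdaC) (f : ZM n m) : n ⟶ m := Quot.mk _ f

/-- The duality functor `Λ_c ⥤ Λ_cᵒᵖ`, given by `dmin`. -/
def Fdual : LambdaC ⥤ LambdaCᵒᵖ where
  obj n := Opposite.op n
  map {n m} f :=
    Quot.lift (fun f0 => (mkHom m n (dminZM f0)).op)
      (fun f0 f0' h => congrArg Quiver.Hom.op
        (Quot.sound (dminZM_rel h) :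
          mkHom m n (dminZM f0) = mkHom m n (dminZM f0'))) f
  map_id n := congrArg Quiver.Hom.op
    (congrArg (mkHom n n) (dminZM_id n))
  map_comp {a b c} f g := by
    induction f using Quot.ind with
    | _ f0 =>
      induction g using Quot.ind with
      | _ g0 =>
        exact congrArg Quiver.Hom.op
          (congrArg (mkHom c a) (dminZM_comp f0 g0))

/-- The duality functor `Λ_cᵒᵖ ⥤ Λ_c`, given by `dmax`. -/
def Gdual : LambdaCᵒᵖ ⥤ LambdaC where
  obj X := X.unop
  map {X Y} f :=
    Quot.lift (fun f0 => Quot.mk (ZMrel X.unop Y.unop) (dmaxZM f0))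
      (fun _ _ h => Quot.sound (dmaxZM_rel h)) f.unop
  map_id X := congrArg (Quot.mk _) (dmaxZM_id X.unop)
  map_comp {a b c} f g := by
    obtain ⟨f0, hf⟩ := Quot.exists_rep f.unop
    obtain ⟨g0, hg⟩ := Quot.exists_rep g.unop
    have hf2 : f = Quiver.Hom.op (mkHom _ _ f0) := by
      rw [show Quiver.Hom.op (mkHom _ _ f0) = Quiver.Hom.op f.unop from congrArg _ hf]
      exact (Quiver.Hom.op_unop f).symm
    have hg2 : g = Quiver.Hom.op (mkHom _ _ g0) := by
      rw [show Quiver.Hom.op (mkHom _ _ g0) = Quiver.Hom.op g.unop from congrArg _ hg]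
      exact (Quiver.Hom.op_unop g).symm
    rw [hf2, hg2]
    exact congrArg (Quot.mk _) (dmaxZM_comp g0 f0)

/-- The cyclic category is self-dual: `Λ_c` is isomorphic to its opposite category via an
isomorphism of categories that is the identity on objects. -/
theorem stmt_11 :
    ∃ (F : LambdaC ⥤ LambdaCᵒᵖ) (G : LambdaCᵒᵖ ⥤ LambdaC),
      F ⋙ G = Functor.id LambdaC ∧ G ⋙ F = Functor.id LambdaCᵒᵖ ∧
      ∀ X : LambdaC, F.obj X = Opposite.op X := by
  refine ⟨Fdual, Gdual, ?_, ?_, fun X => rfl⟩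
  · refine CategoryTheory.Functor.ext (fun X => rfl) (fun X Y f => ?_)
    erw [eqToHom_refl, eqToHom_refl, Category.comp_id, Category.id_comp]
    obtain ⟨f0, hf⟩ := Quot.exists_rep f
    rw [← hf]
    show Quot.mk _ (dmaxZM (dminZM f0)) = Quot.mk _ f0
    exact congrArg (Quot.mk _) (dmaxZM_dminZM f0)
  · refine CategoryTheory.Functor.ext (fun X => rfl) (fun X Y f => ?_)
    erw [eqToHom_refl, eqToHom_refl, Category.comp_id, Category.id_comp]
    obtain ⟨f0, hf⟩ := Quot.exists_rep f.unop
    have hf2 : f = Quiver.Hom.op (mkHom _ _ f0) := by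
      rw [show Quiver.Hom.op (mkHom _ _ f0) = Quiver.Hom.op f.unop from congrArg _ hf]
      exact (Quiver.Hom.op_unop f).symm
    rw [hf2]
    show Quiver.Hom.op (mkHom _ _ (dminZM (dmaxZM f0))) = Quiver.Hom.op (mkHom _ _ f0)
    exact congrArg Quiver.Hom.op (congrArg (mkHom _ _) (dminZM_dmaxZM f0))

end DualityConstruction
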